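/- The function Z(t,x) is of class C^{1,2} on [0,T) × ((0,L) ∪ (L,∞)) and satisfies the partial differential equation ∂Z/∂t(t,x) + r·x·∂Z/∂x(t,x) + (1/2)·σ²·x²·∂²Z/∂x²(t,x) = 0 for all t ∈ [0,T) and x ∈ (0,L) ∪ (L,∞). -/

import Mathlib

open Real Set MeasureTheory Filter

noncomputable section

/-- The standard normal cumulative distribution function `Φ`. -/
def stdCDF (y : ℝ) : ℝ := ∫ z in Iic y, Real.exp (-z ^ 2 / 2) / Real.sqrt (2 * π)

/-- The finite-horizon Azéma supermartingale function `Z(t,x)` (with `α = 2r/σ² - 1`):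
for `t < T`, `Z(t,x) = min{Φ(d₁) + (L/x)^α Φ(d₂), 1}`, and at `t = T` it is `1` for
`x ≥ L` and `0` for `x < L`. -/
def Zt (r σ L T t x : ℝ) : ℝ :=
  if t < T then
    min (stdCDF ((-Real.log (L / x) + (r - σ ^ 2 / 2) * (T - t)) / (σ * Real.sqrt (T - t))) +
        (L / x) ^ (2 * r / σ ^ 2 - 1) *
          stdCDF ((-Real.log (L / x) - (r - σ ^ 2 / 2) * (T - t)) / (σ * Real.sqrt (T - t)))) 1
  else if L ≤ x then 1 else 0

variable {r σ L T t x : ℝ}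

def gpdf (y : ℝ) : ℝ := Real.exp (-y ^ 2 / 2) / Real.sqrt (2 * π)

lemma stdCDF_eq (y : ℝ) : stdCDF y = ∫ z in Iic y, gpdf z := rfl

lemma gpdf_pos (y : ℝ) : 0 < gpdf y :=
  div_pos (Real.exp_pos _) (Real.sqrt_pos.2 (by positivity))

lemma integrable_gpdf : Integrable gpdf := by
  have h : Integrable (fun z : ℝ => Real.exp (-(1/2 : ℝ) * z ^ 2)) := integrable_exp_neg_mul_sq (by norm_num)
  have : gpdf = fun z => Real.exp (-(1/2:ℝ) * z ^ 2) * (Real.sqrt (2*π))⁻¹ := by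
    funext z; rw [gpdf, div_eq_mul_inv]; ring_nf
  rw [this]; exact h.mul_const _

lemma gpdf_eq_mul : gpdf = fun y => Real.exp (-y^2/2) * (Real.sqrt (2*π))⁻¹ := by
  funext y; rw [gpdf, div_eq_mul_inv]

lemma contDiff_gpdf {n : WithTop ℕ∞} : ContDiff ℝ n gpdf := by
  rw [gpdf_eq_mul]
  exact (Real.contDiff_exp.comp (((contDiff_id.pow 2).neg).div_const 2)).mul contDiff_const

lemma continuous_gpdf : Continuous gpdf := (contDiff_gpdf (n := 0)).continuous

lemma hasDerivAt_gpdf (y : ℝ) : HasDerivAt gpdf (-y * gpdf y) y := by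
  have h1 : HasDerivAt (fun y : ℝ => -y ^ 2 / 2) (-y) y := by
    have := ((hasDerivAt_pow 2 y).neg).div_const 2
    refine this.congr_deriv (Eq.symm ?_); push_cast; ring
  have := (h1.exp).div_const (Real.sqrt (2 * π))
  refine this.congr_deriv (Eq.symm ?_); rw [gpdf]; ring

lemma hasDerivAt_stdCDF (y : ℝ) : HasDerivAt stdCDF (gpdf y) y := by
  have key : ∀ z : ℝ, stdCDF z = stdCDF 0 + ∫ u in (0:ℝ)..z, gpdf u := by
    intro z
    have h2 := intervalIntegral.integral_Iic_sub_Iic (integrable_gpdf.integrableOn) (integrable_gpdf.integrableOn) (μ := volume) (a := (0:ℝ)) (b := z)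
    rw [stdCDF_eq, stdCDF_eq]; linarith
  have h : HasDerivAt (fun z => stdCDF 0 + ∫ u in (0:ℝ)..z, gpdf u) (gpdf y) y := by
    have h0 : HasDerivAt (fun u => ∫ x in (0:ℝ)..u, gpdf x) (gpdf y) y :=
      (intervalIntegral.integral_hasStrictDerivAt_right
        (integrable_gpdf.intervalIntegrable (a := 0) (b := y))
        (integrable_gpdf.aestronglyMeasurable.stronglyMeasurableAtFilter (l := nhds y))
        (continuous_gpdf.continuousAt)).hasDerivAt
    exact h0.const_add (stdCDF 0)
  exact h.congr_of_eventuallyEq (Filter.Eventually.of_forall key)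

lemma differentiable_stdCDF : Differentiable ℝ stdCDF := fun y => (hasDerivAt_stdCDF y).differentiableAt

lemma continuous_stdCDF : Continuous stdCDF := differentiable_stdCDF.continuous

lemma deriv_stdCDF : deriv stdCDF = gpdf := funext fun y => (hasDerivAt_stdCDF y).deriv

lemma contDiff_two_stdCDF : ContDiff ℝ 2 stdCDF := by
  rw [show (2 : WithTop ℕ∞) = (1:WithTop ℕ∞) + 1 from rfl, contDiff_succ_iff_deriv]
  refine ⟨differentiable_stdCDF, by simp, by rw [deriv_stdCDF]; exact contDiff_gpdf⟩

lemma integral_gpdf : ∫ z, gpdf z = 1 := by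
  have h : (∫ z : ℝ, Real.exp (-(1/2:ℝ) * z ^ 2)) = Real.sqrt (π / (1/2)) := integral_gaussian (1/2)
  have : ∫ z, gpdf z = (∫ z : ℝ, Real.exp (-(1/2:ℝ) * z ^ 2)) / Real.sqrt (2 * π) := by
    rw [← integral_div]; congr 1; funext z; rw [gpdf]; ring_nf
  rw [this, h, show π / (1/2) = 2 * π by ring, div_self (by positivity : Real.sqrt (2*π) ≠ 0)]

lemma stdCDF_neg (y : ℝ) : stdCDF (-y) = 1 - stdCDF y := by
  have hsplit : (∫ z in Iic y, gpdf z) + (∫ z in Ioi y, gpdf z) = 1 := by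
    rw [← integral_gpdf]
    have := MeasureTheory.integral_add_compl (measurableSet_Iic (a := y)) integrable_gpdf
    rw [compl_Iic] at this; exact this
  have hneg : stdCDF (-y) = ∫ z in Ioi y, gpdf z := by
    rw [stdCDF_eq]
    have h := integral_comp_neg_Iic (-y) gpdf
    simp only [neg_neg] at h
    rw [← h]
    congr 1; funext z; rw [gpdf, gpdf]; ring_nf
  rw [hneg, stdCDF_eq]; linarith

def dd1 (r σ L T t x : ℝ) : ℝ :=
  (-Real.log (L / x) + (r - σ ^ 2 / 2) * (T - t)) / (σ * Real.sqrt (T - t))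
def dd2 (r σ L T t x : ℝ) : ℝ :=
  (-Real.log (L / x) - (r - σ ^ 2 / 2) * (T - t)) / (σ * Real.sqrt (T - t))
def Fe (r σ L T t x : ℝ) : ℝ :=
  stdCDF (dd1 r σ L T t x) + (L / x) ^ (2 * r / σ ^ 2 - 1) * stdCDF (dd2 r σ L T t x)

lemma integral_Iic_shift (g : ℝ → ℝ) (b c : ℝ) :
    ∫ v in Iic (b + c), g (v - c) = ∫ u in Iic b, g u := by
  rw [← integral_indicator measurableSet_Iic, ← integral_indicator measurableSet_Iic]
  have h : ∀ v, (Iic (b + c)).indicator (fun w => g (w - c)) v = (Iic b).indicator g (v - c) := by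
    intro v; by_cases h : v ≤ b + c
    · rw [indicator_of_mem (by simpa using h), indicator_of_mem (by simp only [mem_Iic]; linarith)]
    · rw [indicator_of_notMem (by simpa using h),
        indicator_of_notMem (by simp only [mem_Iic]; intro hh; exact h (by linarith))]
  simp_rw [h]
  exact integral_sub_right_eq_self ((Iic b).indicator g) c

set_option maxHeartbeats 1000000 in
lemma Fe_sign (r σ L T t x : ℝ) (hσ : 0 < σ) (hL : 0 < L) (ht : t < T) (hx : 0 < x) :
    (x < L → Fe r σ L T t x < 1) ∧ (L < x → 1 < Fe r σ L T t x) := by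
  set m : ℝ := Real.log (L / x) with hm
  set q : ℝ := Real.sqrt (T - t) with hqdef
  have hq : 0 < q := Real.sqrt_pos.2 (by linarith)
  have hq2 : q ^ 2 = T - t := Real.sq_sqrt (by linarith)
  set s : ℝ := σ * q with hs
  have hs0 : 0 < s := mul_pos hσ hq
  set k : ℝ := 2 * m / s with hk
  set A : ℝ := dd1 r σ L T t x with hA
  set B : ℝ := dd2 r σ L T t x with hB
  have hAe : A = (-m + (r - σ ^ 2 / 2) * q ^ 2) / s := by rw [hA, dd1, hq2]
  have hBe : B = (-m - (r - σ ^ 2 / 2) * q ^ 2) / s := by rw [hB, dd2, hq2]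
  have hBA : B + k = -A := by
    rw [hAe, hBe, hk]; field_simp; ring
  set E : ℝ := (L / x) ^ (2 * r / σ ^ 2 - 1) with hE
  have hEe : E = Real.exp ((2 * r / σ ^ 2 - 1) * m) := by
    rw [hE, hm, Real.rpow_def_of_pos (div_pos hL hx), mul_comm]
  -- pointwise reflection identity
  have hσ' : σ ≠ 0 := hσ.ne'
  have hq' : q ≠ 0 := hq.ne'
  have step1 : ∀ v : ℝ, E * gpdf (v - k) = gpdf v * Real.exp (k * (v + A)) := by
    intro v
    have key : (2 * r / σ ^ 2 - 1) * m + -(v - k) ^ 2 / 2 = -v ^ 2 / 2 + k * (v + A) := by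
      rw [hAe, hk, hs]
      field_simp
      ring
    calc E * gpdf (v - k)
        = Real.exp ((2 * r / σ ^ 2 - 1) * m + -(v - k) ^ 2 / 2) / Real.sqrt (2 * π) := by
          rw [hEe, gpdf, Real.exp_add]; ring
      _ = Real.exp (-v ^ 2 / 2 + k * (v + A)) / Real.sqrt (2 * π) := by rw [key]
      _ = gpdf v * Real.exp (k * (v + A)) := by rw [gpdf, Real.exp_add]; ring
  -- substitution
  have step2 : E * stdCDF B = ∫ v in Iic (-A), gpdf v * Real.exp (k * (v + A)) := by
    have h1 : E * stdCDF B = ∫ u in Iic B, E * gpdf u := by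
      rw [stdCDF_eq, integral_const_mul]
    have h2 : (∫ v in Iic (B + k), E * gpdf (v - k)) = ∫ u in Iic B, E * gpdf u :=
      integral_Iic_shift (fun u => E * gpdf u) B k
    rw [h1, ← h2, hBA]
    exact setIntegral_congr_fun measurableSet_Iic fun v _ => step1 v
  -- integrability
  have hint : IntegrableOn (fun v => gpdf v * Real.exp (k * (v + A))) (Iic (-A)) := by
    have h1 : Integrable (fun v => gpdf (v - k)) :=
      ((measurePreserving_sub_right volume k).integrable_comp
        integrable_gpdf.aestronglyMeasurable).2 integrable_gpdf
    have h2 : Integrable (fun v => E * gpdf (v - k)) := h1.const_mul E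
    have h3 : Integrable (fun v => gpdf v * Real.exp (k * (v + A))) := by
      have := h2; simp_rw [step1] at this; exact this
    exact h3.integrableOn
  have hintJ : IntegrableOn (fun v => gpdf v * (1 - Real.exp (k * (v + A)))) (Iic (-A)) :=
    ((integrable_gpdf.integrableOn (s := Iic (-A))).sub hint).congr
      (ae_of_all _ fun v => by simp only [Pi.sub_apply]; ring)
  have hJ : 1 - Fe r σ L T t x = ∫ v in Iic (-A), gpdf v * (1 - Real.exp (k * (v + A))) := by
    have : Fe r σ L T t x = stdCDF A + E * stdCDF B := rfl
    rw [this, step2]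
    have hnegA : stdCDF (-A) = 1 - stdCDF A := stdCDF_neg A
    rw [show (1 : ℝ) - (stdCDF A + ∫ v in Iic (-A), gpdf v * Real.exp (k * (v + A)))
        = (1 - stdCDF A) - ∫ v in Iic (-A), gpdf v * Real.exp (k * (v + A)) by ring, ← hnegA,
      stdCDF_eq]
    rw [← integral_sub (integrable_gpdf.integrableOn) hint]
    exact setIntegral_congr_fun measurableSet_Iic fun v _ => by ring
  constructor
  · intro hxL
    have hm0 : 0 < m := Real.log_pos ((one_lt_div hx).2 hxL)
    have hk0 : 0 < k := div_pos (by linarith) hs0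
    have hpos : 0 < ∫ v in Iic (-A), gpdf v * (1 - Real.exp (k * (v + A))) := by
      rw [setIntegral_pos_iff_support_of_nonneg_ae]
      · refine lt_of_lt_of_le ?_ (measure_mono (?_ : Iio (-A) ⊆ _))
        · rw [Real.volume_Iio]; exact ENNReal.zero_lt_top
        · intro v hv
          have hv' : v < -A := hv
          constructor
          · simp only [Function.mem_support]
            have h1 : Real.exp (k * (v + A)) < 1 := by
              rw [← Real.exp_zero]
              exact Real.exp_lt_exp.2 (by nlinarith)
            exact ne_of_gt (mul_pos (gpdf_pos v) (by linarith))
          · exact le_of_lt hv'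
      · refine (ae_restrict_iff' measurableSet_Iic).2 (ae_of_all _ fun v hv => ?_)
        simp only [Pi.zero_apply]
        have h1 : Real.exp (k * (v + A)) ≤ 1 := by
          rw [← Real.exp_zero]
          exact Real.exp_le_exp.2 (by nlinarith [mem_Iic.1 hv])
        have := (gpdf_pos v).le
        nlinarith
      · exact hintJ
    linarith [hpos, hJ]
  · intro hLx
    have hm0 : m < 0 := Real.log_neg (div_pos hL hx) ((div_lt_one hx).2 hLx)
    have hk0 : k < 0 := div_neg_of_neg_of_pos (by linarith) hs0
    have hpos : 0 < ∫ v in Iic (-A), gpdf v * (Real.exp (k * (v + A)) - 1) := by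
      rw [setIntegral_pos_iff_support_of_nonneg_ae]
      · refine lt_of_lt_of_le ?_ (measure_mono (?_ : Iio (-A) ⊆ _))
        · rw [Real.volume_Iio]; exact ENNReal.zero_lt_top
        · intro v hv
          have hv' : v < -A := hv
          constructor
          · simp only [Function.mem_support]
            have h1 : 1 < Real.exp (k * (v + A)) := by
              rw [← Real.exp_zero]
              exact Real.exp_lt_exp.2 (by nlinarith)
            exact ne_of_gt (mul_pos (gpdf_pos v) (by linarith))
          · exact le_of_lt hv'
      · refine (ae_restrict_iff' measurableSet_Iic).2 (ae_of_all _ fun v hv => ?_)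
        simp only [Pi.zero_apply]
        have h1 : 1 ≤ Real.exp (k * (v + A)) := by
          rw [← Real.exp_zero]
          exact Real.exp_le_exp.2 (by nlinarith [mem_Iic.1 hv])
        have := (gpdf_pos v).le
        nlinarith
      · exact (hint.sub (integrable_gpdf.integrableOn (s := Iic (-A)))).congr
          (ae_of_all _ fun v => by simp only [Pi.sub_apply]; ring)
    have hneg : (∫ v in Iic (-A), gpdf v * (Real.exp (k * (v + A)) - 1))
        = -(∫ v in Iic (-A), gpdf v * (1 - Real.exp (k * (v + A)))) := by
      rw [← integral_neg]
      exact setIntegral_congr_fun measurableSet_Iic fun v _ => by ring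
    rw [hneg] at hpos
    linarith [hJ, neg_pos.1 hpos]
def FtE (r σ L T t x : ℝ) : ℝ :=
  (gpdf (dd1 r σ L T t x) * dd2 r σ L T t x
    + (L/x) ^ (2*r/σ^2-1) * gpdf (dd2 r σ L T t x) * dd1 r σ L T t x) / (2*(T-t))

def GE (r σ L T t y : ℝ) : ℝ :=
  gpdf (dd1 r σ L T t y) * (y * (σ * Real.sqrt (T - t)))⁻¹
  + (-(2*r/σ^2-1) * (L/y) ^ (2*r/σ^2-1) / y) * stdCDF (dd2 r σ L T t y)
  + (L/y) ^ (2*r/σ^2-1) * (gpdf (dd2 r σ L T t y) * (y * (σ * Real.sqrt (T - t)))⁻¹)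

def G2E (r σ L T t x : ℝ) : ℝ :=
  (-(dd1 r σ L T t x) * gpdf (dd1 r σ L T t x)
     - dd2 r σ L T t x * (L/x)^(2*r/σ^2-1) * gpdf (dd2 r σ L T t x)) / (x * (σ * Real.sqrt (T-t)))^2
  + (-(gpdf (dd1 r σ L T t x)) - (L/x)^(2*r/σ^2-1) * gpdf (dd2 r σ L T t x)) / (x^2 * (σ * Real.sqrt (T-t)))
  + ((2*r/σ^2-1)^2 + (2*r/σ^2-1)) * (L/x)^(2*r/σ^2-1) * stdCDF (dd2 r σ L T t x) / x^2
  - 2*(2*r/σ^2-1) * (L/x)^(2*r/σ^2-1) * gpdf (dd2 r σ L T t x) / (x^2 * (σ * Real.sqrt (T-t)))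

variable {r σ L T t x : ℝ}

lemma hasDerivAt_logL (hL : 0 < L) (hx : 0 < x) :
    HasDerivAt (fun y => Real.log (L / y)) (-x⁻¹) x := by
  have h1 : HasDerivAt (fun y : ℝ => L / y) (L * (-(x^2)⁻¹)) x := by
    simpa [div_eq_mul_inv] using (hasDerivAt_inv hx.ne').const_mul L
  have h2 := (Real.hasDerivAt_log (ne_of_gt (div_pos hL hx))).comp x h1
  refine h2.congr_deriv (Eq.symm ?_)
  field_simp

lemma hasDerivAt_rpowL (hL : 0 < L) (hx : 0 < x) {a : ℝ} :
    HasDerivAt (fun y => (L/y) ^ a) (-a * (L/x)^a / x) x := by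
  have hev : (fun y => Real.exp (Real.log (L / y) * a)) =ᶠ[nhds x] (fun y => (L/y) ^ a) := by
    filter_upwards [isOpen_Ioi.eventually_mem (show x ∈ Ioi (0:ℝ) from hx)] with y hy
    rw [Real.rpow_def_of_pos (div_pos hL hy)]
  have h1 : HasDerivAt (fun y => Real.exp (Real.log (L / y) * a))
      (Real.exp (Real.log (L / x) * a) * (-x⁻¹ * a)) x :=
    (((hasDerivAt_logL hL hx).mul_const a)).exp
  have h2 := h1.congr_of_eventuallyEq hev.symm
  refine h2.congr_deriv (Eq.symm ?_)
  rw [← Real.rpow_def_of_pos (div_pos hL hx), div_eq_mul_inv]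
  ring

lemma hasDerivAt_dd1_x (hσ : 0 < σ) (hL : 0 < L) (ht : t < T) (hx : 0 < x) :
    HasDerivAt (fun y => dd1 r σ L T t y) ((x * (σ * Real.sqrt (T-t)))⁻¹) x := by
  have hq : 0 < Real.sqrt (T - t) := Real.sqrt_pos.2 (by linarith)
  have h1 := (((hasDerivAt_logL hL hx).neg).add_const ((r - σ^2/2) * (T - t))).div_const
    (σ * Real.sqrt (T - t))
  have : (fun y => dd1 r σ L T t y)
      = fun y => (-Real.log (L / y) + (r - σ^2/2) * (T - t)) / (σ * Real.sqrt (T - t)) := rfl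
  rw [this]
  refine h1.congr_deriv (Eq.symm ?_)
  field_simp

lemma hasDerivAt_dd2_x (hσ : 0 < σ) (hL : 0 < L) (ht : t < T) (hx : 0 < x) :
    HasDerivAt (fun y => dd2 r σ L T t y) ((x * (σ * Real.sqrt (T-t)))⁻¹) x := by
  have hq : 0 < Real.sqrt (T - t) := Real.sqrt_pos.2 (by linarith)
  have h1 := (((hasDerivAt_logL hL hx).neg).sub_const ((r - σ^2/2) * (T - t))).div_const
    (σ * Real.sqrt (T - t))
  have : (fun y => dd2 r σ L T t y)
      = fun y => (-Real.log (L / y) - (r - σ^2/2) * (T - t)) / (σ * Real.sqrt (T - t)) := rfl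
  rw [this]
  refine h1.congr_deriv (Eq.symm ?_)
  field_simp

lemma hasDerivAt_dd1_t (hσ : 0 < σ) (ht : t < T) :
    HasDerivAt (fun s => dd1 r σ L T s x) (dd2 r σ L T t x / (2*(T-t))) t := by
  have hq : 0 < Real.sqrt (T - t) := Real.sqrt_pos.2 (by linarith)
  have hq2 : Real.sqrt (T - t) ^ 2 = T - t := Real.sq_sqrt (by linarith)
  have hTs : HasDerivAt (fun s : ℝ => T - s) (-1) t := (hasDerivAt_id t).const_sub T
  have hsq : HasDerivAt (fun s => Real.sqrt (T - s)) (1 / (2 * Real.sqrt (T-t)) * (-1)) t :=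
    (hasDerivAt_sqrt (by linarith : T - t ≠ 0)).comp t hTs
  have hnum : HasDerivAt (fun s : ℝ => -Real.log (L / x) + (r - σ^2/2) * (T - s))
      ((r - σ^2/2) * (-1)) t := (hTs.const_mul _).const_add _
  have hden : HasDerivAt (fun s => σ * Real.sqrt (T - s)) (σ * (1 / (2 * Real.sqrt (T-t)) * (-1))) t :=
    hsq.const_mul σ
  have h := hnum.div hden (by positivity)
  have : (fun s => dd1 r σ L T s x)
      = fun s => (-Real.log (L / x) + (r - σ^2/2) * (T - s)) / (σ * Real.sqrt (T - s)) := rfl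
  rw [this]
  refine h.congr_deriv (Eq.symm ?_)
  rw [dd2]
  obtain ⟨q, hq0, hqq, hsq⟩ : ∃ q:ℝ, 0 < q ∧ T - t = q^2 ∧ Real.sqrt (T - t) = q :=
    ⟨Real.sqrt (T-t), hq, (Real.sq_sqrt (by linarith)).symm, rfl⟩
  rw [hsq, hqq]
  field_simp
  ring

lemma hasDerivAt_dd2_t (hσ : 0 < σ) (ht : t < T) :
    HasDerivAt (fun s => dd2 r σ L T s x) (dd1 r σ L T t x / (2*(T-t))) t := by
  have hq : 0 < Real.sqrt (T - t) := Real.sqrt_pos.2 (by linarith)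
  have hq2 : Real.sqrt (T - t) ^ 2 = T - t := Real.sq_sqrt (by linarith)
  have hTs : HasDerivAt (fun s : ℝ => T - s) (-1) t := (hasDerivAt_id t).const_sub T
  have hsq : HasDerivAt (fun s => Real.sqrt (T - s)) (1 / (2 * Real.sqrt (T-t)) * (-1)) t :=
    (hasDerivAt_sqrt (by linarith : T - t ≠ 0)).comp t hTs
  have hnum : HasDerivAt (fun s : ℝ => -Real.log (L / x) - (r - σ^2/2) * (T - s))
      (-((r - σ^2/2) * (-1))) t := (hTs.const_mul _).const_sub _
  have hden : HasDerivAt (fun s => σ * Real.sqrt (T - s)) (σ * (1 / (2 * Real.sqrt (T-t)) * (-1))) t :=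
    hsq.const_mul σ
  have h := hnum.div hden (by positivity)
  have : (fun s => dd2 r σ L T s x)
      = fun s => (-Real.log (L / x) - (r - σ^2/2) * (T - s)) / (σ * Real.sqrt (T - s)) := rfl
  rw [this]
  refine h.congr_deriv (Eq.symm ?_)
  rw [dd1]
  obtain ⟨q, hq0, hqq, hsq⟩ : ∃ q:ℝ, 0 < q ∧ T - t = q^2 ∧ Real.sqrt (T - t) = q :=
    ⟨Real.sqrt (T-t), hq, (Real.sq_sqrt (by linarith)).symm, rfl⟩
  rw [hsq, hqq]
  field_simp
  ring

lemma hasDerivAt_Fe_t (hσ : 0 < σ) (ht : t < T) :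
    HasDerivAt (fun s => Fe r σ L T s x) (FtE r σ L T t x) t := by
  have h1 := (hasDerivAt_stdCDF (dd1 r σ L T t x)).comp t (hasDerivAt_dd1_t hσ ht)
  have h2 := ((hasDerivAt_stdCDF (dd2 r σ L T t x)).comp t
    (hasDerivAt_dd2_t hσ ht)).const_mul ((L/x) ^ (2*r/σ^2-1))
  refine (h1.add h2).congr_deriv (Eq.symm ?_)
  rw [FtE]; ring

lemma hasDerivAt_Fe_x (hσ : 0 < σ) (hL : 0 < L) (ht : t < T) (hx : 0 < x) :
    HasDerivAt (fun y => Fe r σ L T t y) (GE r σ L T t x) x := by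
  have h1 := (hasDerivAt_stdCDF (dd1 r σ L T t x)).comp x (hasDerivAt_dd1_x hσ hL ht hx)
  have h2 := (hasDerivAt_rpowL hL hx (a := 2*r/σ^2-1)).mul
    ((hasDerivAt_stdCDF (dd2 r σ L T t x)).comp x (hasDerivAt_dd2_x hσ hL ht hx))
  refine (h1.add h2).congr_deriv (Eq.symm ?_)
  rw [GE]; simp only [Function.comp_apply]; ring

lemma hasDerivAt_GE (hσ : 0 < σ) (hL : 0 < L) (ht : t < T) (hx : 0 < x) :
    HasDerivAt (fun y => GE r σ L T t y) (G2E r σ L T t x) x := by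
  have hq : 0 < Real.sqrt (T - t) := Real.sqrt_pos.2 (by linarith)
  have hc : (0:ℝ) < σ * Real.sqrt (T - t) := by positivity
  have v1 : HasDerivAt (fun y => (y * (σ * Real.sqrt (T - t)))⁻¹)
      (-(1 * (σ * Real.sqrt (T - t))) / (x * (σ * Real.sqrt (T - t))) ^ 2) x :=
    ((hasDerivAt_id x).mul_const _).inv (by positivity)
  have u1 := (hasDerivAt_gpdf (dd1 r σ L T t x)).comp x (hasDerivAt_dd1_x hσ hL ht hx)
  have t1 := u1.mul v1
  have f2 := ((hasDerivAt_rpowL hL hx (a := 2*r/σ^2-1)).const_mul (-(2*r/σ^2-1))).div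
    (hasDerivAt_id x) hx.ne'
  have t2 := f2.mul ((hasDerivAt_stdCDF (dd2 r σ L T t x)).comp x (hasDerivAt_dd2_x hσ hL ht hx))
  have u3 := (hasDerivAt_gpdf (dd2 r σ L T t x)).comp x (hasDerivAt_dd2_x hσ hL ht hx)
  have t3 := (hasDerivAt_rpowL hL hx (a := 2*r/σ^2-1)).mul (u3.mul v1)
  refine ((t1.add t2).add t3).congr_deriv (Eq.symm ?_)
  rw [G2E]
  simp only [Function.comp_apply, id_eq, Pi.mul_apply, Pi.div_apply]
  field_simp
  ring

lemma key_id (hσ : 0 < σ) (hL : 0 < L) (ht : t < T) (hx : 0 < x) :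
    (L/x) ^ (2*r/σ^2-1) * gpdf (dd2 r σ L T t x) = gpdf (dd1 r σ L T t x) := by
  have hq : 0 < Real.sqrt (T - t) := Real.sqrt_pos.2 (by linarith)
  rw [dd1, dd2, Real.rpow_def_of_pos (div_pos hL hx), gpdf, gpdf]
  obtain ⟨q, hq0, hqq, hsq⟩ : ∃ q:ℝ, 0 < q ∧ T - t = q^2 ∧ Real.sqrt (T - t) = q :=
    ⟨Real.sqrt (T-t), hq, (Real.sq_sqrt (by linarith)).symm, rfl⟩
  rw [hsq, hqq, ← mul_div_assoc, ← Real.exp_add]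
  congr 1
  field_simp
  ring

lemma pde_identity (hσ : 0 < σ) (hL : 0 < L) (ht : t < T) (hx : 0 < x) :
    FtE r σ L T t x + r * x * GE r σ L T t x + 1/2 * σ^2 * x^2 * G2E r σ L T t x = 0 := by
  have hq : 0 < Real.sqrt (T - t) := Real.sqrt_pos.2 (by linarith)
  have hkey := (key_id (r := r) (L := L) (T := T) hσ hL ht hx).symm
  rw [FtE, GE, G2E, hkey, dd1, dd2]
  obtain ⟨q, hq0, hqq, hsq⟩ : ∃ q:ℝ, 0 < q ∧ T - t = q^2 ∧ Real.sqrt (T - t) = q :=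
    ⟨Real.sqrt (T-t), hq, (Real.sq_sqrt (by linarith)).symm, rfl⟩
  rw [hsq, hqq]
  field_simp
  ring
lemma Zt_eq_min (h : t < T) : Zt r σ L T t x = min (Fe r σ L T t x) 1 := by
  unfold Zt; rw [if_pos h]; rfl

lemma contAt_all (hσ : 0 < σ) (hL : 0 < L) (ht : t < T) (hx : 0 < x) :
    ContinuousAt (fun p : ℝ × ℝ => Fe r σ L T p.1 p.2) (t, x) ∧
    ContinuousAt (fun p : ℝ × ℝ => FtE r σ L T p.1 p.2) (t, x) ∧
    ContinuousAt (fun p : ℝ × ℝ => GE r σ L T p.1 p.2) (t, x) ∧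
    ContinuousAt (fun p : ℝ × ℝ => G2E r σ L T p.1 p.2) (t, x) := by
  have hq : 0 < Real.sqrt (T - t) := Real.sqrt_pos.2 (by linarith)
  have hLx : L / x ≠ 0 := ne_of_gt (div_pos hL hx)
  have hdiv : ContinuousAt (fun p : ℝ × ℝ => L / p.2) (t, x) :=
    continuousAt_const.div continuousAt_snd hx.ne'
  have hlog : ContinuousAt (fun p : ℝ × ℝ => Real.log (L / p.2)) (t, x) :=
    ContinuousAt.comp (g := Real.log) (Real.continuousAt_log hLx) hdiv
  have hsqrt : ContinuousAt (fun p : ℝ × ℝ => Real.sqrt (T - p.1)) (t, x) :=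
    Real.continuous_sqrt.continuousAt.comp (continuousAt_const.sub continuousAt_fst)
  have hden : ContinuousAt (fun p : ℝ × ℝ => σ * Real.sqrt (T - p.1)) (t, x) :=
    continuousAt_const.mul hsqrt
  have hden0 : σ * Real.sqrt (T - t) ≠ 0 := by positivity
  have hTt : ContinuousAt (fun p : ℝ × ℝ => (r - σ^2/2) * (T - p.1)) (t, x) :=
    continuousAt_const.mul (continuousAt_const.sub continuousAt_fst)
  have hdd1 : ContinuousAt (fun p : ℝ × ℝ => dd1 r σ L T p.1 p.2) (t, x) := by
    simp only [dd1]; exact (hlog.neg.add hTt).div hden hden0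
  have hdd2 : ContinuousAt (fun p : ℝ × ℝ => dd2 r σ L T p.1 p.2) (t, x) := by
    simp only [dd2]; exact (hlog.neg.sub hTt).div hden hden0
  have hE : ContinuousAt (fun p : ℝ × ℝ => (L / p.2) ^ (2*r/σ^2-1)) (t, x) :=
    ContinuousAt.comp (g := fun z : ℝ => z ^ (2*r/σ^2-1))
      (Real.continuousAt_rpow_const _ _ (Or.inl hLx)) hdiv
  have hg1 : ContinuousAt (fun p : ℝ × ℝ => gpdf (dd1 r σ L T p.1 p.2)) (t, x) :=
    continuous_gpdf.continuousAt.comp hdd1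
  have hg2 : ContinuousAt (fun p : ℝ × ℝ => gpdf (dd2 r σ L T p.1 p.2)) (t, x) :=
    continuous_gpdf.continuousAt.comp hdd2
  have hs1 : ContinuousAt (fun p : ℝ × ℝ => stdCDF (dd1 r σ L T p.1 p.2)) (t, x) :=
    continuous_stdCDF.continuousAt.comp hdd1
  have hs2 : ContinuousAt (fun p : ℝ × ℝ => stdCDF (dd2 r σ L T p.1 p.2)) (t, x) :=
    continuous_stdCDF.continuousAt.comp hdd2
  have hinv : ContinuousAt (fun p : ℝ × ℝ => (p.2 * (σ * Real.sqrt (T - p.1)))⁻¹) (t, x) :=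
    (continuousAt_snd.mul hden).inv₀ (mul_ne_zero hx.ne' hden0)
  refine ⟨?_, ?_, ?_, ?_⟩
  · simp only [Fe]; exact hs1.add (hE.mul hs2)
  · simp only [FtE]
    exact ((hg1.mul hdd2).add ((hE.mul hg2).mul hdd1)).div
      (continuousAt_const.mul (continuousAt_const.sub continuousAt_fst))
      (ne_of_gt (by linarith : (0:ℝ) < 2 * (T - t)))
  · simp only [GE]
    exact ((hg1.mul hinv).add
      (((continuousAt_const.mul hE).div continuousAt_snd hx.ne').mul hs2)).add
      (hE.mul (hg2.mul hinv))
  · simp only [G2E]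
    refine (((?_ : ContinuousAt _ _).div ((continuousAt_snd.mul hden).pow 2) (pow_ne_zero 2 (mul_ne_zero hx.ne' hden0))).add
      ((?_ : ContinuousAt _ _).div ((continuousAt_snd.pow 2).mul hden) (mul_ne_zero (pow_ne_zero 2 hx.ne') hden0))).add
      ((((continuousAt_const.mul hE).mul hs2).div (continuousAt_snd.pow 2) (pow_ne_zero 2 hx.ne'))) |>.sub
      (((continuousAt_const.mul hE).mul hg2).div ((continuousAt_snd.pow 2).mul hden) (mul_ne_zero (pow_ne_zero 2 hx.ne') hden0))
    · exact (hdd1.neg.mul hg1).sub ((hdd2.mul hE).mul hg2)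
    · exact (hg1.neg).sub (hE.mul hg2)

lemma contDiffAt_Fe (hσ : 0 < σ) (hL : 0 < L) (ht : t < T) (hx : 0 < x) :
    ContDiffAt ℝ 2 (fun y => Fe r σ L T t y) x := by
  have hq : 0 < Real.sqrt (T - t) := Real.sqrt_pos.2 (by linarith)
  have hLx : L / x ≠ 0 := ne_of_gt (div_pos hL hx)
  have hdiv : ContDiffAt ℝ 2 (fun y : ℝ => L / y) x :=
    contDiffAt_const.div contDiffAt_id hx.ne'
  have hlog : ContDiffAt ℝ 2 (fun y : ℝ => Real.log (L / y)) x :=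
    ContDiffAt.comp (g := Real.log) x (Real.contDiffAt_log.2 hLx) hdiv
  have hdd1 : ContDiffAt ℝ 2 (fun y => dd1 r σ L T t y) x := by
    simp only [dd1]
    exact (hlog.neg.add contDiffAt_const).div contDiffAt_const
      (ne_of_gt (mul_pos hσ hq))
  have hdd2 : ContDiffAt ℝ 2 (fun y => dd2 r σ L T t y) x := by
    simp only [dd2]
    exact (hlog.neg.sub contDiffAt_const).div contDiffAt_const
      (ne_of_gt (mul_pos hσ hq))
  have hE : ContDiffAt ℝ 2 (fun y : ℝ => (L / y) ^ (2*r/σ^2-1)) x :=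
    ContDiffAt.comp (g := fun z : ℝ => z ^ (2*r/σ^2-1)) x
      (Real.contDiffAt_rpow_const_of_ne hLx) hdiv
  simp only [Fe]
  exact (contDiff_two_stdCDF.contDiffAt.comp x hdd1).add
    (hE.mul (contDiff_two_stdCDF.contDiffAt.comp x hdd2))

lemma desc_lt (hσ : 0 < σ) (hL : 0 < L) (ht : t < T) (hx : 0 < x) (hxL : x < L) :
    HasDerivAt (fun s => Zt r σ L T s x) (FtE r σ L T t x) t ∧
    ContDiffAt ℝ 2 (fun y => Zt r σ L T t y) x ∧
    (fun p : ℝ × ℝ => deriv (fun s => Zt r σ L T s p.2) p.1) =ᶠ[nhds (t, x)]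
      (fun p => FtE r σ L T p.1 p.2) ∧
    (fun p : ℝ × ℝ => deriv (fun y => Zt r σ L T p.1 y) p.2) =ᶠ[nhds (t, x)]
      (fun p => GE r σ L T p.1 p.2) ∧
    (fun p : ℝ × ℝ => deriv (deriv (fun y => Zt r σ L T p.1 y)) p.2) =ᶠ[nhds (t, x)]
      (fun p => G2E r σ L T p.1 p.2) := by
  have h1 : ∀ᶠ p : ℝ × ℝ in nhds (t, x), p.1 < T :=
    (isOpen_lt continuous_fst continuous_const).eventually_mem (show (t, x) ∈ {p : ℝ × ℝ | p.1 < T} from ht)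
  have h2 : ∀ᶠ p : ℝ × ℝ in nhds (t, x), 0 < p.2 :=
    (isOpen_lt continuous_const continuous_snd).eventually_mem (show (t, x) ∈ {p : ℝ × ℝ | 0 < p.2} from hx)
  have h3 : ∀ᶠ p : ℝ × ℝ in nhds (t, x), Fe r σ L T p.1 p.2 < 1 :=
    (contAt_all hσ hL ht hx).1.eventually_lt continuousAt_const
      ((Fe_sign r σ L T t x hσ hL ht hx).1 hxL)
  have hjoint : ∀ᶠ p : ℝ × ℝ in nhds (t, x),
      Zt r σ L T p.1 p.2 = Fe r σ L T p.1 p.2 ∧ p.1 < T ∧ 0 < p.2 := by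
    filter_upwards [h1, h2, h3] with p hp1 hp2 hp3
    exact ⟨by rw [Zt_eq_min hp1]; exact min_eq_left hp3.le, hp1, hp2⟩
  obtain ⟨u, v, hu_open, hu, hv_open, hv, huv⟩ := mem_nhds_prod_iff'.1 hjoint
  have key_t : ∀ s ∈ u, ∀ y ∈ v, deriv (fun s' => Zt r σ L T s' y) s = FtE r σ L T s y := by
    intro s hs y hy
    have hev : (fun s' => Zt r σ L T s' y) =ᶠ[nhds s] (fun s' => Fe r σ L T s' y) := by
      filter_upwards [hu_open.mem_nhds hs] with s' hs'
      exact (huv (Set.mk_mem_prod hs' hy)).1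
    have hsT : s < T := (huv (Set.mk_mem_prod hs hy)).2.1
    rw [hev.deriv_eq, (hasDerivAt_Fe_t hσ hsT).deriv]
  have key_x : ∀ s ∈ u, ∀ y ∈ v, deriv (fun y' => Zt r σ L T s y') y = GE r σ L T s y := by
    intro s hs y hy
    have hev : (fun y' => Zt r σ L T s y') =ᶠ[nhds y] (fun y' => Fe r σ L T s y') := by
      filter_upwards [hv_open.mem_nhds hy] with y' hy'
      exact (huv (Set.mk_mem_prod hs hy')).1
    have hsT : s < T := (huv (Set.mk_mem_prod hs hy)).2.1
    have hy0 : 0 < y := (huv (Set.mk_mem_prod hs hy)).2.2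
    rw [hev.deriv_eq, (hasDerivAt_Fe_x hσ hL hsT hy0).deriv]
  have key_xx : ∀ s ∈ u, ∀ y ∈ v, deriv (deriv (fun y' => Zt r σ L T s y')) y
      = G2E r σ L T s y := by
    intro s hs y hy
    have hev : deriv (fun y' => Zt r σ L T s y') =ᶠ[nhds y] (fun y' => GE r σ L T s y') := by
      filter_upwards [hv_open.mem_nhds hy] with y' hy'
      exact key_x s hs y' hy'
    have hsT : s < T := (huv (Set.mk_mem_prod hs hy)).2.1
    have hy0 : 0 < y := (huv (Set.mk_mem_prod hs hy)).2.2
    rw [hev.deriv_eq, (hasDerivAt_GE hσ hL hsT hy0).deriv]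
  have hprod : u ×ˢ v ∈ nhds (t, x) := prod_mem_nhds (hu_open.mem_nhds hu) (hv_open.mem_nhds hv)
  refine ⟨?_, ?_, ?_, ?_, ?_⟩
  · have hev : (fun s => Zt r σ L T s x) =ᶠ[nhds t] (fun s => Fe r σ L T s x) := by
      have hsec : Filter.Tendsto (fun s : ℝ => (s, x)) (nhds t) (nhds (t, x)) :=
        (continuous_id.prodMk continuous_const).continuousAt
      filter_upwards [hsec.eventually hjoint] with s hs using hs.1
    exact (hasDerivAt_Fe_t hσ ht).congr_of_eventuallyEq hev
  · have hev : (fun y => Zt r σ L T t y) =ᶠ[nhds x] (fun y => Fe r σ L T t y) := by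
      have hsec : Filter.Tendsto (fun y : ℝ => (t, y)) (nhds x) (nhds (t, x)) :=
        (continuous_const.prodMk continuous_id).continuousAt
      filter_upwards [hsec.eventually hjoint] with y hy using hy.1
    exact (contDiffAt_Fe hσ hL ht hx).congr_of_eventuallyEq hev
  · filter_upwards [hprod] with p hp using key_t p.1 hp.1 p.2 hp.2
  · filter_upwards [hprod] with p hp using key_x p.1 hp.1 p.2 hp.2
  · filter_upwards [hprod] with p hp using key_xx p.1 hp.1 p.2 hp.2

lemma desc_gt (hσ : 0 < σ) (hL : 0 < L) (ht : t < T) (hxL : L < x) :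
    HasDerivAt (fun s => Zt r σ L T s x) 0 t ∧
    ContDiffAt ℝ 2 (fun y => Zt r σ L T t y) x ∧
    (fun p : ℝ × ℝ => deriv (fun s => Zt r σ L T s p.2) p.1) =ᶠ[nhds (t, x)] (fun _ => 0) ∧
    (fun p : ℝ × ℝ => deriv (fun y => Zt r σ L T p.1 y) p.2) =ᶠ[nhds (t, x)] (fun _ => 0) ∧
    (fun p : ℝ × ℝ => deriv (deriv (fun y => Zt r σ L T p.1 y)) p.2) =ᶠ[nhds (t, x)]
      (fun _ => 0) := by
  have hx : 0 < x := hL.trans hxL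
  have h1 : ∀ᶠ p : ℝ × ℝ in nhds (t, x), p.1 < T :=
    (isOpen_lt continuous_fst continuous_const).eventually_mem (show (t, x) ∈ {p : ℝ × ℝ | p.1 < T} from ht)
  have h3 : ∀ᶠ p : ℝ × ℝ in nhds (t, x), 1 < Fe r σ L T p.1 p.2 :=
    continuousAt_const.eventually_lt (contAt_all hσ hL ht hx).1
      ((Fe_sign r σ L T t x hσ hL ht hx).2 hxL)
  have hjoint : ∀ᶠ p : ℝ × ℝ in nhds (t, x), Zt r σ L T p.1 p.2 = 1 := by
    filter_upwards [h1, h3] with p hp1 hp3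
    rw [Zt_eq_min hp1]; exact min_eq_right hp3.le
  obtain ⟨u, v, hu_open, hu, hv_open, hv, huv⟩ := mem_nhds_prod_iff'.1 hjoint
  have key_t : ∀ s ∈ u, ∀ y ∈ v, deriv (fun s' => Zt r σ L T s' y) s = 0 := by
    intro s hs y hy
    have hev : (fun s' => Zt r σ L T s' y) =ᶠ[nhds s] (fun _ => 1) := by
      filter_upwards [hu_open.mem_nhds hs] with s' hs' using huv (Set.mk_mem_prod hs' hy)
    rw [hev.deriv_eq, deriv_const]
  have key_x : ∀ s ∈ u, ∀ y ∈ v, deriv (fun y' => Zt r σ L T s y') y = 0 := by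
    intro s hs y hy
    have hev : (fun y' => Zt r σ L T s y') =ᶠ[nhds y] (fun _ => 1) := by
      filter_upwards [hv_open.mem_nhds hy] with y' hy' using huv (Set.mk_mem_prod hs hy')
    rw [hev.deriv_eq, deriv_const]
  have key_xx : ∀ s ∈ u, ∀ y ∈ v, deriv (deriv (fun y' => Zt r σ L T s y')) y = 0 := by
    intro s hs y hy
    have hev : deriv (fun y' => Zt r σ L T s y') =ᶠ[nhds y] (fun _ => 0) := by
      filter_upwards [hv_open.mem_nhds hy] with y' hy' using key_x s hs y' hy'
    rw [hev.deriv_eq, deriv_const]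
  have hprod : u ×ˢ v ∈ nhds (t, x) := prod_mem_nhds (hu_open.mem_nhds hu) (hv_open.mem_nhds hv)
  refine ⟨?_, ?_, ?_, ?_, ?_⟩
  · have hev : (fun s => Zt r σ L T s x) =ᶠ[nhds t] (fun _ => 1) := by
      have hsec : Filter.Tendsto (fun s : ℝ => (s, x)) (nhds t) (nhds (t, x)) :=
        (continuous_id.prodMk continuous_const).continuousAt
      filter_upwards [hsec.eventually hjoint] with s hs using hs
    exact (hasDerivAt_const t (1:ℝ)).congr_of_eventuallyEq hev
  · have hev : (fun y => Zt r σ L T t y) =ᶠ[nhds x] (fun _ => 1) := by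
      have hsec : Filter.Tendsto (fun y : ℝ => (t, y)) (nhds x) (nhds (t, x)) :=
        (continuous_const.prodMk continuous_id).continuousAt
      filter_upwards [hsec.eventually hjoint] with y hy using hy
    exact contDiffAt_const.congr_of_eventuallyEq hev
  · filter_upwards [hprod] with p hp using key_t p.1 hp.1 p.2 hp.2
  · filter_upwards [hprod] with p hp using key_x p.1 hp.1 p.2 hp.2
  · filter_upwards [hprod] with p hp using key_xx p.1 hp.1 p.2 hp.2

/-- The function `Z(t,x)` is of class `C^{1,2}` on
`[0,T) × ((0,L) ∪ (L,∞))`: it is once differentiable in `t` and twice differentiable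
in `x`, with these partial derivatives continuous on the domain; and it satisfies the
PDE `∂Z/∂t + r·x·∂Z/∂x + (1/2)·σ²·x²·∂²Z/∂x² = 0` for all `t ∈ [0,T)` and
`x ∈ (0,L) ∪ (L,∞)`. -/
theorem stmt_7 (r σ L K T : ℝ) (hr : 0 < r) (hσ : 0 < σ) (hL : 0 < L) (hLK : L < K)
    (hT : 0 < T) :
    (∀ t ∈ Ico (0 : ℝ) T, ∀ x ∈ Ioo (0 : ℝ) L ∪ Ioi L,
      DifferentiableAt ℝ (fun s => Zt r σ L T s x) t ∧
      ContDiffAt ℝ 2 (fun y => Zt r σ L T t y) x) ∧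
    ContinuousOn (fun p : ℝ × ℝ => deriv (fun s => Zt r σ L T s p.2) p.1)
      (Ico (0 : ℝ) T ×ˢ (Ioo (0 : ℝ) L ∪ Ioi L)) ∧
    ContinuousOn (fun p : ℝ × ℝ => deriv (fun y => Zt r σ L T p.1 y) p.2)
      (Ico (0 : ℝ) T ×ˢ (Ioo (0 : ℝ) L ∪ Ioi L)) ∧
    ContinuousOn (fun p : ℝ × ℝ => deriv (deriv (fun y => Zt r σ L T p.1 y)) p.2)
      (Ico (0 : ℝ) T ×ˢ (Ioo (0 : ℝ) L ∪ Ioi L)) ∧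
    ∀ t ∈ Ico (0 : ℝ) T, ∀ x ∈ Ioo (0 : ℝ) L ∪ Ioi L,
      deriv (fun s => Zt r σ L T s x) t + r * x * deriv (fun y => Zt r σ L T t y) x +
          1 / 2 * σ ^ 2 * x ^ 2 * deriv (deriv (fun y => Zt r σ L T t y)) x = 0 := by
  refine ⟨?_, ?_, ?_, ?_, ?_⟩
  · intro t ht x hx
    rcases hx with hx | hx
    · obtain ⟨d, c, -, -, -⟩ := desc_lt hσ hL ht.2 hx.1 hx.2
      exact ⟨d.differentiableAt, c⟩
    · obtain ⟨d, c, -, -, -⟩ := desc_gt hσ hL ht.2 hx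
      exact ⟨d.differentiableAt, c⟩
  · rintro ⟨t, x⟩ hp
    obtain ⟨ht, hx⟩ := hp
    apply ContinuousAt.continuousWithinAt
    rcases hx with hx | hx
    · exact ((contAt_all hσ hL ht.2 hx.1).2.1).congr ((desc_lt hσ hL ht.2 hx.1 hx.2).2.2.1).symm
    · exact continuousAt_const.congr ((desc_gt hσ hL ht.2 hx).2.2.1).symm
  · rintro ⟨t, x⟩ hp
    obtain ⟨ht, hx⟩ := hp
    apply ContinuousAt.continuousWithinAt
    rcases hx with hx | hx
    · exact ((contAt_all hσ hL ht.2 hx.1).2.2.1).congr ((desc_lt hσ hL ht.2 hx.1 hx.2).2.2.2.1).symm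
    · exact continuousAt_const.congr ((desc_gt hσ hL ht.2 hx).2.2.2.1).symm
  · rintro ⟨t, x⟩ hp
    obtain ⟨ht, hx⟩ := hp
    apply ContinuousAt.continuousWithinAt
    rcases hx with hx | hx
    · exact ((contAt_all hσ hL ht.2 hx.1).2.2.2).congr ((desc_lt hσ hL ht.2 hx.1 hx.2).2.2.2.2).symm
    · exact continuousAt_const.congr ((desc_gt hσ hL ht.2 hx).2.2.2.2).symm
  · intro t ht x hx
    rcases hx with hx | hx
    · obtain ⟨d, -, -, e2, e3⟩ := desc_lt hσ hL ht.2 hx.1 hx.2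
      rw [d.deriv, (show deriv (fun y => Zt r σ L T t y) x = GE r σ L T t x from e2.eq_of_nhds),
        (show deriv (deriv (fun y => Zt r σ L T t y)) x = G2E r σ L T t x from e3.eq_of_nhds)]
      exact pde_identity hσ hL ht.2 hx.1
    · obtain ⟨d, -, -, e2, e3⟩ := desc_gt hσ hL ht.2 hx
      rw [d.deriv, (show deriv (fun y => Zt r σ L T t y) x = 0 from e2.eq_of_nhds),
        (show deriv (deriv (fun y => Zt r σ L T t y)) x = 0 from e3.eq_of_nhds)]
      ring

end
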